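/- Let c₁ > 0, b < 0, a, d ∈ ℝ, and set α² = √(−b/c₁). For s > 0 let M(s) be the 2×2 real matrix with rows (1 + a·s², −c₁·s) and (b·s, 1 + d·s²). Then for all sufficiently small s > 0, M(s) has two distinct real eigenvalues λ₋(s) < λ₊(s) with eigenvectors (1, m₋(s)) and (1, m₊(s)), and as s → 0⁺: λ±(s) = 1 ± α²c₁·s + ((a + d)/2)·s² + O(s³), m₋(s) = α² + ((a − d)/(2c₁))·s + O(s²), and m₊(s) = −α² + ((a − d)/(2c₁))·s + O(s²). -/

import Mathlib

open Real Matrix Filter Topology Asymptotics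

/-- Eigenvalue and eigenvector-slope expansion (4.4) for the Jacobian
`M(s) = [[1 + a s², −c₁ s], [b s, 1 + d s²]]` with `c₁ > 0`, `b < 0`:
for small `s > 0`, `M(s)` has two distinct real eigenvalues
`λ±(s) = 1 ± α²c₁ s + ((a+d)/2) s² + O(s³)`, with eigenvectors of slopes
`m∓(s) = ±α² + ((a−d)/(2c₁)) s + O(s²)`, where `α² = √(−b/c₁)`. -/
theorem stmt_13 (c₁ b a d : ℝ) (hc₁ : 0 < c₁) (hb : b < 0)
    (M : ℝ → Matrix (Fin 2) (Fin 2) ℝ)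
    (hM : ∀ s : ℝ, M s = !![1 + a * s ^ 2, -c₁ * s; b * s, 1 + d * s ^ 2]) :
    ∃ s₀ > (0 : ℝ), ∃ lamm lamp mm mp : ℝ → ℝ,
      (∀ s ∈ Set.Ioo (0 : ℝ) s₀,
        lamm s < lamp s ∧
        (M s).mulVec ![1, mm s] = lamm s • ![1, mm s] ∧
        (M s).mulVec ![1, mp s] = lamp s • ![1, mp s]) ∧
      (fun s => lamm s -
          (1 - Real.sqrt (-b / c₁) * c₁ * s + (a + d) / 2 * s ^ 2))
        =O[𝓝[>] (0 : ℝ)] (fun s => s ^ 3) ∧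
      (fun s => lamp s -
          (1 + Real.sqrt (-b / c₁) * c₁ * s + (a + d) / 2 * s ^ 2))
        =O[𝓝[>] (0 : ℝ)] (fun s => s ^ 3) ∧
      (fun s => mm s - (Real.sqrt (-b / c₁) + (a - d) / (2 * c₁) * s))
        =O[𝓝[>] (0 : ℝ)] (fun s => s ^ 2) ∧
      (fun s => mp s - (-Real.sqrt (-b / c₁) + (a - d) / (2 * c₁) * s))
        =O[𝓝[>] (0 : ℝ)] (fun s => s ^ 2) := by
  have hbc : 0 < -b * c₁ := mul_pos (neg_pos.mpr hb) hc₁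
  set R : ℝ → ℝ := fun s => Real.sqrt (-b * c₁ + ((a - d) / 2) ^ 2 * s ^ 2)
    with hRdef
  set R0 : ℝ := Real.sqrt (-b * c₁) with hR0def
  have hR0 : 0 < R0 := Real.sqrt_pos.mpr hbc
  have hRsq : ∀ s, (R s) ^ 2 = -b * c₁ + ((a - d) / 2) ^ 2 * s ^ 2 := fun s =>
    Real.sq_sqrt (by positivity)
  have hRge : ∀ s, R0 ≤ R s := fun s =>
    Real.sqrt_le_sqrt (by nlinarith [sq_nonneg ((a - d) / 2 * s)])
  have hdiff : ∀ s, R s - R0 ≤ ((a - d) / 2) ^ 2 * s ^ 2 / R0 := by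
    intro s
    rw [le_div_iff₀ hR0]
    have h1 := hRsq s
    have h2 : R0 ^ 2 = -b * c₁ := Real.sq_sqrt hbc.le
    nlinarith [hRge s, hR0]
  have hsq : Real.sqrt (-b / c₁) * c₁ = R0 := by
    rw [hR0def, show -b * c₁ = (-b / c₁) * c₁ ^ 2 by field_simp,
      Real.sqrt_mul (div_nonneg (by linarith) hc₁.le), Real.sqrt_sq hc₁.le]
  have hsq' : Real.sqrt (-b / c₁) = R0 / c₁ := by
    rw [eq_div_iff hc₁.ne']; exact hsq
  refine ⟨1, one_pos,
    fun s => 1 + (a + d) / 2 * s ^ 2 - s * R s,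
    fun s => 1 + (a + d) / 2 * s ^ 2 + s * R s,
    fun s => ((a - d) / 2 * s + R s) / c₁,
    fun s => ((a - d) / 2 * s - R s) / c₁, ?_, ?_, ?_, ?_, ?_⟩
  · rintro s ⟨hs, -⟩
    have hRspos : 0 < R s := lt_of_lt_of_le hR0 (hRge s)
    have hk := hRsq s
    have row1m : (1 + a * s ^ 2) * 1 + (-c₁ * s) * (((a - d) / 2 * s + R s) / c₁)
        = (1 + (a + d) / 2 * s ^ 2 - s * R s) * 1 := by
      field_simp; ring
    have row2m : b * s * 1 + (1 + d * s ^ 2) * (((a - d) / 2 * s + R s) / c₁)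
        = (1 + (a + d) / 2 * s ^ 2 - s * R s) * (((a - d) / 2 * s + R s) / c₁) := by
      field_simp; linear_combination (4 * s) * hk
    have row1p : (1 + a * s ^ 2) * 1 + (-c₁ * s) * (((a - d) / 2 * s - R s) / c₁)
        = (1 + (a + d) / 2 * s ^ 2 + s * R s) * 1 := by
      field_simp; ring
    have row2p : b * s * 1 + (1 + d * s ^ 2) * (((a - d) / 2 * s - R s) / c₁)
        = (1 + (a + d) / 2 * s ^ 2 + s * R s) * (((a - d) / 2 * s - R s) / c₁) := by
      field_simp; linear_combination (4 * s) * hk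
    refine ⟨by nlinarith, ?_, ?_⟩ <;>
      rw [hM s] <;> funext i <;> fin_cases i <;>
        simp only [Matrix.mulVec, dotProduct, Fin.sum_univ_two,
          Matrix.cons_val', Matrix.cons_val_zero, Matrix.cons_val_one,
          Matrix.head_cons, Matrix.head_fin_const, Matrix.empty_val',
          Matrix.cons_val_fin_one, Pi.smul_apply, smul_eq_mul,
          Fin.mk_zero, Fin.mk_one, Fin.isValue, Matrix.of_apply] <;>
        [linear_combination row1m; linear_combination row2m;
         linear_combination row1p; linear_combination row2p]
  · rw [isBigO_iff]
    refine ⟨((a - d) / 2) ^ 2 / R0, ?_⟩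
    filter_upwards [self_mem_nhdsWithin] with s hs
    have hs : 0 < s := hs
    have key : (1 + (a + d) / 2 * s ^ 2 - s * R s) -
        (1 - Real.sqrt (-b / c₁) * c₁ * s + (a + d) / 2 * s ^ 2)
        = -(s * (R s - R0)) := by rw [hsq]; ring
    rw [key, norm_neg, Real.norm_eq_abs, Real.norm_eq_abs,
      abs_of_nonneg (by nlinarith [hRge s]),
      abs_of_nonneg (by positivity : (0:ℝ) ≤ s ^ 3)]
    calc s * (R s - R0) ≤ s * (((a - d) / 2) ^ 2 * s ^ 2 / R0) := by
            have := hdiff s; nlinarith [hRge s]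
      _ = ((a - d) / 2) ^ 2 / R0 * s ^ 3 := by ring
  · rw [isBigO_iff]
    refine ⟨((a - d) / 2) ^ 2 / R0, ?_⟩
    filter_upwards [self_mem_nhdsWithin] with s hs
    have hs : 0 < s := hs
    have key : (1 + (a + d) / 2 * s ^ 2 + s * R s) -
        (1 + Real.sqrt (-b / c₁) * c₁ * s + (a + d) / 2 * s ^ 2)
        = s * (R s - R0) := by rw [hsq]; ring
    rw [key, Real.norm_eq_abs, Real.norm_eq_abs,
      abs_of_nonneg (by nlinarith [hRge s]),
      abs_of_nonneg (by positivity : (0:ℝ) ≤ s ^ 3)]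
    calc s * (R s - R0) ≤ s * (((a - d) / 2) ^ 2 * s ^ 2 / R0) := by
            have := hdiff s; nlinarith [hRge s]
      _ = ((a - d) / 2) ^ 2 / R0 * s ^ 3 := by ring
  · rw [isBigO_iff]
    refine ⟨((a - d) / 2) ^ 2 / (R0 * c₁), ?_⟩
    filter_upwards [self_mem_nhdsWithin] with s hs
    have hs : 0 < s := hs
    have key : ((a - d) / 2 * s + R s) / c₁ -
        (Real.sqrt (-b / c₁) + (a - d) / (2 * c₁) * s)
        = (R s - R0) / c₁ := by rw [hsq']; field_simp; ring
    rw [key, Real.norm_eq_abs, Real.norm_eq_abs, abs_div,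
      abs_of_nonneg (sub_nonneg.mpr (hRge s)), abs_of_pos hc₁,
      abs_of_nonneg (by positivity : (0:ℝ) ≤ s ^ 2)]
    calc (R s - R0) / c₁ ≤ (((a - d) / 2) ^ 2 * s ^ 2 / R0) / c₁ := by
            gcongr; exact hdiff s
      _ = ((a - d) / 2) ^ 2 / (R0 * c₁) * s ^ 2 := by ring
  · rw [isBigO_iff]
    refine ⟨((a - d) / 2) ^ 2 / (R0 * c₁), ?_⟩
    filter_upwards [self_mem_nhdsWithin] with s hs
    have hs : 0 < s := hs
    have key : ((a - d) / 2 * s - R s) / c₁ -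
        (-Real.sqrt (-b / c₁) + (a - d) / (2 * c₁) * s)
        = -((R s - R0) / c₁) := by rw [hsq']; field_simp; ring
    rw [key, norm_neg, Real.norm_eq_abs, Real.norm_eq_abs, abs_div,
      abs_of_nonneg (sub_nonneg.mpr (hRge s)), abs_of_pos hc₁,
      abs_of_nonneg (by positivity : (0:ℝ) ≤ s ^ 2)]
    calc (R s - R0) / c₁ ≤ (((a - d) / 2) ^ 2 * s ^ 2 / R0) / c₁ := by
            gcongr; exact hdiff s
      _ = ((a - d) / 2) ^ 2 / (R0 * c₁) * s ^ 2 := by ring
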